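/- Let Φ and ν denote the standard normal cumulative distribution function and density, let p₁ be an even polynomial and p₂ an odd polynomial, and let (F_n)_{n≥1} be a sequence of functions ℝ → [0,1] satisfying sup_{x∈ℝ} |F_n(x) − Φ(x) − n^{−1/2}·p₁(x)·ν(x) − n^{−1}·p₂(x)·ν(x)| ≤ K·n^{−3/2} for some constant K and all n. Fix q₀ > 0 and set D = −p₂(√q₀). Then F_n(√q₀ + D/n) − F_n(−√q₀ − D/n) = (2Φ(√q₀) − 1) + O(n^{−3/2}), i.e., there is a constant C with |F_n(√q₀ + D/n) − F_n(−√q₀ − D/n) − (2Φ(√q₀) − 1)| ≤ C·n^{−3/2} for all sufficiently large n. -/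

import Mathlib

open ProbabilityTheory

noncomputable section

/-- The standard normal density `ν(x) = (2π)^{-1/2} e^{-x²/2}`. -/
def stdNormalPDF (x : ℝ) : ℝ := (Real.sqrt (2 * Real.pi))⁻¹ * Real.exp (-(x ^ 2) / 2)

/-- The standard normal cumulative distribution function `Φ`. -/
def stdNormalCDF (x : ℝ) : ℝ := ((gaussianReal 0 1) (Set.Iic x)).toReal

open MeasureTheory Set

lemma stdNormalPDF_eq_gaussian : stdNormalPDF = gaussianPDFReal 0 1 := by
  ext x
  simp [stdNormalPDF, gaussianPDFReal]

lemma stdNormalPDF_nonneg (x : ℝ) : 0 ≤ stdNormalPDF x := by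
  rw [stdNormalPDF_eq_gaussian]; exact gaussianPDFReal_nonneg 0 1 x

lemma stdNormalPDF_neg (x : ℝ) : stdNormalPDF (-x) = stdNormalPDF x := by
  simp [stdNormalPDF]

lemma integrable_stdNormalPDF : Integrable stdNormalPDF := by
  rw [stdNormalPDF_eq_gaussian]; exact integrable_gaussianPDFReal 0 1

lemma integral_stdNormalPDF : ∫ x, stdNormalPDF x = 1 := by
  rw [stdNormalPDF_eq_gaussian]; exact integral_gaussianPDFReal_eq_one 0 one_ne_zero

lemma stdNormalCDF_eq_integral (x : ℝ) :
    stdNormalCDF x = ∫ t in Iic x, stdNormalPDF t := by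
  rw [stdNormalCDF, gaussianReal_apply_eq_integral 0 one_ne_zero, ENNReal.toReal_ofReal,
    stdNormalPDF_eq_gaussian]
  exact setIntegral_nonneg measurableSet_Iic fun t _ => gaussianPDFReal_nonneg 0 1 t

lemma stdNormalCDF_neg (x : ℝ) : stdNormalCDF (-x) = 1 - stdNormalCDF x := by
  have h1 : stdNormalCDF (-x) = ∫ t in Ioi x, stdNormalPDF t := by
    rw [stdNormalCDF_eq_integral]
    have : ∀ t : ℝ, stdNormalPDF t = stdNormalPDF (-t) := fun t => (stdNormalPDF_neg t).symm
    calc ∫ t in Iic (-x), stdNormalPDF t = ∫ t in Iic (-x), stdNormalPDF (-t) := by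
          exact setIntegral_congr_fun measurableSet_Iic fun t _ => this t
      _ = ∫ t in Ioi (-(-x)), stdNormalPDF t := integral_comp_neg_Iic (-x) stdNormalPDF
      _ = ∫ t in Ioi x, stdNormalPDF t := by rw [neg_neg]
  have h2 : (∫ t in Iic x, stdNormalPDF t) + ∫ t in Ioi x, stdNormalPDF t = 1 := by
    rw [intervalIntegral.integral_Iic_add_Ioi integrable_stdNormalPDF.integrableOn
      integrable_stdNormalPDF.integrableOn, integral_stdNormalPDF]
  rw [h1, stdNormalCDF_eq_integral]
  linarith

lemma hasDerivAt_stdNormalPDF (x : ℝ) :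
    HasDerivAt stdNormalPDF (-x * stdNormalPDF x) x := by
  have h1 : HasDerivAt (fun y : ℝ => -(y ^ 2) / 2) (-x) x := by
    have := ((hasDerivAt_pow 2 x).neg.div_const 2)
    exact this.congr_deriv (by norm_num; ring)
  have h2 := (Real.hasDerivAt_exp (-(x ^ 2) / 2)).comp x h1
  have h3 := h2.const_mul (Real.sqrt (2 * Real.pi))⁻¹
  exact h3.congr_deriv (by simp [stdNormalPDF]; ring)

lemma differentiable_stdNormalPDF : Differentiable ℝ stdNormalPDF :=
  fun x => (hasDerivAt_stdNormalPDF x).differentiableAt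

lemma deriv_stdNormalPDF (x : ℝ) : deriv stdNormalPDF x = -x * stdNormalPDF x :=
  (hasDerivAt_stdNormalPDF x).deriv

lemma abs_deriv_stdNormalPDF_le (x : ℝ) : |deriv stdNormalPDF x| ≤ 1 := by
  rw [deriv_stdNormalPDF, abs_mul, abs_neg]
  have hc : (Real.sqrt (2 * Real.pi))⁻¹ ≤ 1 := by
    rw [inv_le_one_iff₀]
    right
    rw [show (1 : ℝ) = Real.sqrt 1 by simp]
    apply Real.sqrt_le_sqrt
    nlinarith [Real.pi_gt_three]
  have hpdf : |stdNormalPDF x| = stdNormalPDF x := abs_of_nonneg (stdNormalPDF_nonneg x)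
  rw [hpdf, stdNormalPDF]
  have hexp : Real.exp (-(x ^ 2) / 2) ≤ 1 := by
    rw [Real.exp_le_one_iff]
    nlinarith [sq_nonneg x]
  have hx : |x| * Real.exp (-(x ^ 2) / 2) ≤ 1 := by
    have h1 : |x| ≤ Real.exp (x ^ 2 / 2) := by
      have := Real.add_one_le_exp (x ^ 2 / 2)
      nlinarith [sq_nonneg (|x| - 1), sq_abs x]
    have h2 : Real.exp (-(x ^ 2) / 2) = (Real.exp (x ^ 2 / 2))⁻¹ := by
      rw [← Real.exp_neg]; ring_nf
    rw [h2]
    rw [mul_inv_le_iff₀ (Real.exp_pos _), one_mul]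
    exact h1
  calc |x| * ((Real.sqrt (2 * Real.pi))⁻¹ * Real.exp (-(x ^ 2) / 2))
      ≤ |x| * (1 * Real.exp (-(x ^ 2) / 2)) := by
        apply mul_le_mul_of_nonneg_left _ (abs_nonneg x)
        apply mul_le_mul_of_nonneg_right hc (Real.exp_pos _).le
    _ = |x| * Real.exp (-(x ^ 2) / 2) := by ring
    _ ≤ 1 := hx

lemma stdNormalPDF_lipschitz (a b : ℝ) : |stdNormalPDF b - stdNormalPDF a| ≤ |b - a| := by
  have := Convex.norm_image_sub_le_of_norm_deriv_le (s := Set.univ) (f := stdNormalPDF)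
    (fun x _ => differentiable_stdNormalPDF x)
    (fun x _ => by rw [Real.norm_eq_abs]; exact abs_deriv_stdNormalPDF_le x)
    convex_univ (Set.mem_univ a) (Set.mem_univ b)
  simpa [Real.norm_eq_abs] using this

/-- Taylor-type bound for Φ. -/
lemma stdNormalCDF_taylor (a b : ℝ) :
    |stdNormalCDF b - stdNormalCDF a - (b - a) * stdNormalPDF a| ≤ (b - a) ^ 2 := by
  have hint : stdNormalCDF b - stdNormalCDF a = ∫ t in a..b, stdNormalPDF t := by
    rw [stdNormalCDF_eq_integral, stdNormalCDF_eq_integral]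
    exact intervalIntegral.integral_Iic_sub_Iic integrable_stdNormalPDF.integrableOn
      integrable_stdNormalPDF.integrableOn
  have hconst : (b - a) * stdNormalPDF a = ∫ _t in a..b, stdNormalPDF a := by
    rw [intervalIntegral.integral_const, smul_eq_mul]
  rw [hint, hconst, ← intervalIntegral.integral_sub
    (integrable_stdNormalPDF.intervalIntegrable) intervalIntegrable_const]
  have hb : ∀ t ∈ Set.uIoc a b, ‖stdNormalPDF t - stdNormalPDF a‖ ≤ |b - a| := by
    intro t ht
    rw [Real.norm_eq_abs]
    refine (stdNormalPDF_lipschitz a t).trans ?_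
    rcases le_total a b with hab | hab
    · rw [Set.uIoc_of_le hab] at ht
      rw [abs_of_nonneg (by linarith [ht.1.le] : (0:ℝ) ≤ t - a),
        abs_of_nonneg (by linarith : (0:ℝ) ≤ b - a)]
      linarith [ht.2]
    · rw [Set.uIoc_of_ge hab] at ht
      rw [abs_of_nonpos (by linarith [ht.2] : t - a ≤ 0),
        abs_of_nonpos (by linarith : b - a ≤ 0)]
      linarith [ht.1]
  have := intervalIntegral.norm_integral_le_of_norm_le_const hb
  rw [Real.norm_eq_abs] at this
  calc |∫ t in a..b, (stdNormalPDF t - stdNormalPDF a)| ≤ |b - a| * |b - a| := this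
    _ = (b - a) ^ 2 := by rw [← abs_mul, ← sq, abs_sq]


lemma polyPDF_lipschitz (p : Polynomial ℝ) (s : ℝ) :
    ∃ L : ℝ, 0 ≤ L ∧ ∀ x : ℝ, |x - s| ≤ 1 →
      |p.eval x * stdNormalPDF x - p.eval s * stdNormalPDF s| ≤ L * |x - s| := by
  have hν : Continuous stdNormalPDF := differentiable_stdNormalPDF.continuous
  have hgd : ∀ x : ℝ, HasDerivAt (fun y => p.eval y * stdNormalPDF y)
      (p.derivative.eval x * stdNormalPDF x + p.eval x * (-x * stdNormalPDF x)) x :=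
    fun x => (p.hasDerivAt x).mul (hasDerivAt_stdNormalPDF x)
  have hderiv : deriv (fun y => p.eval y * stdNormalPDF y)
      = fun x => p.derivative.eval x * stdNormalPDF x + p.eval x * (-x * stdNormalPDF x) :=
    funext fun x => (hgd x).deriv
  have hcont : ContinuousOn (deriv (fun y => p.eval y * stdNormalPDF y))
      (Set.Icc (s - 1) (s + 1)) := by
    rw [hderiv]
    exact (((p.derivative.continuous).mul hν).add
      ((p.continuous).mul ((continuous_id.neg).mul hν))).continuousOn
  obtain ⟨C, hC⟩ := (isCompact_Icc (a := s - 1) (b := s + 1)).exists_bound_of_continuousOn hcont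
  refine ⟨max C 0, le_max_right _ _, fun x hx => ?_⟩
  have hxmem : x ∈ Set.Icc (s - 1) (s + 1) := by
    rw [Set.mem_Icc]
    constructor
    · linarith [(abs_le.mp hx).1]
    · linarith [(abs_le.mp hx).2]
  have hsmem : s ∈ Set.Icc (s - 1) (s + 1) := by
    rw [Set.mem_Icc]; constructor <;> linarith
  have := Convex.norm_image_sub_le_of_norm_deriv_le (f := fun y => p.eval y * stdNormalPDF y) (C := max C 0)
    (s := Set.Icc (s - 1) (s + 1))
    (fun y _ => (hgd y).differentiableAt)
    (fun y hy => le_trans (hC y hy) (le_max_left C 0))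
    (convex_Icc _ _) hsmem hxmem
  simpa [Real.norm_eq_abs] using this

set_option maxHeartbeats 1600000 in
/-- **Symmetric-interval correction via a two-term Edgeworth expansion (Section 5).**
If `F_n : ℝ → [0,1]` satisfies
`sup_x |F_n(x) − Φ(x) − n^{-1/2}p₁(x)ν(x) − n^{-1}p₂(x)ν(x)| ≤ K·n^{-3/2}`
with `p₁` an even polynomial and `p₂` an odd polynomial, then for `q₀ > 0` and
`D = −p₂(√q₀)` one has
`F_n(√q₀ + D/n) − F_n(−√q₀ − D/n) = 2Φ(√q₀) − 1 + O(n^{-3/2})`. -/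
theorem edgeworth_symmetric_interval_correction
    (p₁ p₂ : Polynomial ℝ)
    (hp₁ : ∀ x : ℝ, p₁.eval (-x) = p₁.eval x)
    (hp₂ : ∀ x : ℝ, p₂.eval (-x) = -p₂.eval x)
    (F : ℕ → ℝ → ℝ) (hF01 : ∀ n x, F n x ∈ Set.Icc (0 : ℝ) 1)
    (K : ℝ)
    (hEdge : ∀ n : ℕ, 1 ≤ n → ∀ x : ℝ,
      |F n x - stdNormalCDF x - ((n : ℝ) ^ ((1 : ℝ) / 2))⁻¹ * p₁.eval x * stdNormalPDF x
          - (n : ℝ)⁻¹ * p₂.eval x * stdNormalPDF x| ≤ K * ((n : ℝ) ^ ((3 : ℝ) / 2))⁻¹)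
    (q₀ : ℝ) (hq₀ : 0 < q₀) :
    ∃ C : ℝ, ∃ N : ℕ, ∀ n : ℕ, N ≤ n →
      |F n (Real.sqrt q₀ + (-p₂.eval (Real.sqrt q₀)) / (n : ℝ))
          - F n (-Real.sqrt q₀ - (-p₂.eval (Real.sqrt q₀)) / (n : ℝ))
          - (2 * stdNormalCDF (Real.sqrt q₀) - 1)| ≤ C * ((n : ℝ) ^ ((3 : ℝ) / 2))⁻¹ := by
  obtain ⟨L, hL0, hLip⟩ := polyPDF_lipschitz p₂ (Real.sqrt q₀)
  set s : ℝ := Real.sqrt q₀ with hs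
  set D : ℝ := -p₂.eval s with hD
  have hD2 : p₂.eval s = -D := by rw [hD]; ring
  refine ⟨2 * K + 2 * D ^ 2 + 2 * (L * |D|), max 1 (Nat.ceil |D| + 1), fun n hn => ?_⟩
  have hn1 : 1 ≤ n := le_trans (le_max_left _ _) hn
  have hnR : (1 : ℝ) ≤ (n : ℝ) := by exact_mod_cast hn1
  have hnpos : (0 : ℝ) < (n : ℝ) := by linarith
  have hne : (n : ℝ) ≠ 0 := ne_of_gt hnpos
  have hDn : |D| / (n : ℝ) ≤ 1 := by
    rw [div_le_one hnpos]
    have h1 : (Nat.ceil |D| + 1 : ℕ) ≤ n := le_trans (le_max_right _ _) hn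
    have h2 : |D| ≤ (Nat.ceil |D| : ℝ) := Nat.le_ceil _
    have h3 : ((Nat.ceil |D| + 1 : ℕ) : ℝ) ≤ (n : ℝ) := by exact_mod_cast h1
    push_cast at h3
    linarith
  set x : ℝ := s + D / (n : ℝ) with hx
  have hnegx : -s - D / (n : ℝ) = -x := by rw [hx]; ring
  rw [hnegx]
  set a : ℝ := ((n : ℝ) ^ ((1 : ℝ) / 2))⁻¹ with ha
  set b3 : ℝ := ((n : ℝ) ^ ((3 : ℝ) / 2))⁻¹ with hb3
  have hb3pos : (0 : ℝ) < (n : ℝ) ^ ((3 : ℝ) / 2) := Real.rpow_pos_of_pos hnpos _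
  have hb3nonneg : (0 : ℝ) ≤ b3 := by rw [hb3]; positivity
  have hn2 : ((n : ℝ) ^ 2)⁻¹ ≤ b3 := by
    rw [hb3]
    apply inv_anti₀ hb3pos
    calc (n : ℝ) ^ ((3 : ℝ) / 2) ≤ (n : ℝ) ^ ((2 : ℕ) : ℝ) :=
          Real.rpow_le_rpow_of_exponent_le hnR (by norm_num)
      _ = (n : ℝ) ^ 2 := Real.rpow_natCast _ 2
  have hE1 := hEdge n hn1 x
  have hE2 := hEdge n hn1 (-x)
  have hxs : x - s = D / (n : ℝ) := by rw [hx]; ring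
  have habsxs : |x - s| ≤ 1 := by rw [hxs, abs_div, abs_of_pos hnpos]; exact hDn
  have hT := stdNormalCDF_taylor s x
  have hg := hLip x habsxs
  rw [hD2] at hg
  -- key algebraic decomposition
  have key : F n x - F n (-x) - (2 * stdNormalCDF s - 1)
      = (F n x - stdNormalCDF x - a * p₁.eval x * stdNormalPDF x
          - (n : ℝ)⁻¹ * p₂.eval x * stdNormalPDF x)
        - (F n (-x) - stdNormalCDF (-x) - a * p₁.eval (-x) * stdNormalPDF (-x)
          - (n : ℝ)⁻¹ * p₂.eval (-x) * stdNormalPDF (-x))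
        + 2 * (stdNormalCDF x - stdNormalCDF s - (x - s) * stdNormalPDF s)
        + 2 * (n : ℝ)⁻¹ * (p₂.eval x * stdNormalPDF x - (-D) * stdNormalPDF s) := by
    rw [stdNormalPDF_neg, stdNormalCDF_neg, hp₁ x, hp₂ x, hxs]
    field_simp
    ring
  rw [key]
  set e1 : ℝ := F n x - stdNormalCDF x - a * p₁.eval x * stdNormalPDF x
      - (n : ℝ)⁻¹ * p₂.eval x * stdNormalPDF x with he1
  set e2 : ℝ := F n (-x) - stdNormalCDF (-x) - a * p₁.eval (-x) * stdNormalPDF (-x)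
      - (n : ℝ)⁻¹ * p₂.eval (-x) * stdNormalPDF (-x) with he2
  set t : ℝ := stdNormalCDF x - stdNormalCDF s - (x - s) * stdNormalPDF s with ht
  set gd : ℝ := p₂.eval x * stdNormalPDF x - (-D) * stdNormalPDF s with hgd
  have hcnonneg : (0 : ℝ) ≤ (n : ℝ)⁻¹ := by positivity
  have habs : |e1 - e2 + 2 * t + 2 * (n : ℝ)⁻¹ * gd|
      ≤ |e1| + |e2| + 2 * |t| + 2 * (n : ℝ)⁻¹ * |gd| := by
    have h1 := abs_add_le (e1 - e2 + 2 * t) (2 * (n : ℝ)⁻¹ * gd)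
    have h2 := abs_add_le (e1 - e2) (2 * t)
    have h3 := abs_sub e1 e2
    have h4 : |2 * t| = 2 * |t| := by rw [abs_mul, abs_of_nonneg (by norm_num : (0:ℝ) ≤ 2)]
    have h5 : |2 * (n : ℝ)⁻¹ * gd| = 2 * (n : ℝ)⁻¹ * |gd| := by
      rw [abs_mul, abs_of_nonneg (by positivity : (0:ℝ) ≤ 2 * (n : ℝ)⁻¹)]
    linarith
  have hTbound : |t| ≤ D ^ 2 * b3 := by
    calc |t| ≤ (x - s) ^ 2 := hT
      _ = (D / (n : ℝ)) ^ 2 := by rw [hxs]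
      _ = D ^ 2 * ((n : ℝ) ^ 2)⁻¹ := by field_simp
      _ ≤ D ^ 2 * b3 := mul_le_mul_of_nonneg_left hn2 (sq_nonneg D)
  have hgbound : (n : ℝ)⁻¹ * |gd| ≤ L * |D| * b3 := by
    have h6 : |gd| ≤ L * (|D| / (n : ℝ)) := by
      have := hg
      rw [hxs, abs_div, abs_of_pos hnpos] at this
      exact this
    calc (n : ℝ)⁻¹ * |gd| ≤ (n : ℝ)⁻¹ * (L * (|D| / (n : ℝ))) :=
          mul_le_mul_of_nonneg_left h6 hcnonneg
      _ = L * |D| * ((n : ℝ) ^ 2)⁻¹ := by rw [sq]; field_simp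
      _ ≤ L * |D| * b3 := mul_le_mul_of_nonneg_left hn2 (mul_nonneg hL0 (abs_nonneg D))
  have hE1' : |e1| ≤ K * b3 := hE1
  have hE2' : |e2| ≤ K * b3 := hE2
  clear_value s D x a b3 e1 e2 t gd
  calc |e1 - e2 + 2 * t + 2 * (n : ℝ)⁻¹ * gd|
      ≤ |e1| + |e2| + 2 * |t| + 2 * (n : ℝ)⁻¹ * |gd| := habs
    _ ≤ K * b3 + K * b3 + 2 * (D ^ 2 * b3) + 2 * (L * |D| * b3) := by nlinarith [hgbound, hTbound, hE1', hE2']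
    _ = (2 * K + 2 * D ^ 2 + 2 * (L * |D|)) * b3 := by ring
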